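/- Let f be a 4-form and g a quadratic form in ℝ[x₁,x₂], with g(x') > 0 for some x' ∈ ℝ². Then {x : g(x) ≥ 0} ⊆ {x : f(x) ≥ 0} if and only if there exists a nonnegative homogeneous polynomial t ∈ ℝ[x₁,x₂] of degree at most 2 such that f(x) − t(x)g(x) ≥ 0 for all x ∈ ℝ². -/

import Mathlib

namespace S4aux
section PolyPart
open Polynomial

lemma nonneg_on_closure (q : ℝ[X]) (S : Set ℝ) (h : ∀ s ∈ S, 0 ≤ q.eval s) :
    ∀ s ∈ closure S, 0 ≤ q.eval s := fun s hs =>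
  closure_minimal h (isClosed_le continuous_const q.continuous) hs

lemma exists_root_between {f : ℝ → ℝ} (hf : Continuous f) {a b : ℝ}
    (ha : f a ≤ 0) (hb : 0 ≤ f b) : ∃ c, f c = 0 :=
  intermediate_value_univ a b hf ⟨ha, hb⟩

lemma double_root_of_localmin {p : ℝ[X]} {r : ℝ} (hr : p.eval r = 0)
    (hd : p.derivative.eval r = 0) : ∃ q, p = (X - C r)^2 * q := by
  obtain ⟨q1, hq1⟩ := dvd_iff_isRoot.mpr hr
  have hq1r : q1.eval r = 0 := by
    have hder := congrArg derivative hq1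
    rw [derivative_mul, derivative_sub, derivative_X, derivative_C, sub_zero, one_mul] at hder
    have h2 := congrArg (eval r) hder
    simp at h2
    rw [hd] at h2
    linarith
  obtain ⟨q, hq2⟩ := dvd_iff_isRoot.mpr hq1r
  exact ⟨q, by rw [hq1, hq2]; ring⟩

lemma ML : ∀ m : ℕ, ∀ p : ℝ[X], p.natDegree ≤ m → (∀ s : ℝ, 0 ≤ s → 0 ≤ p.eval s) →
    ∃ P Q : ℝ[X], 2 * P.natDegree ≤ m ∧ (Q = 0 ∨ 2 * Q.natDegree + 1 ≤ m) ∧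
      ∀ s : ℝ, p.eval s = (P.eval s)^2 + s * (Q.eval s)^2 := by
  intro m
  induction m using Nat.strong_induction_on with
  | _ m IH =>
  intro p hdm hnn
  by_cases hp0 : p = 0
  · exact ⟨0, 0, by simp, Or.inl rfl, by simp [hp0]⟩
  by_cases hdeg0 : p.natDegree = 0
  · have hc : p = C (p.coeff 0) := eq_C_of_natDegree_eq_zero hdeg0
    have hc0 : 0 ≤ p.coeff 0 := by have := hnn 0 le_rfl; rwa [hc, eval_C] at this
    refine ⟨C (Real.sqrt (p.coeff 0)), 0, by simp, Or.inl rfl, ?_⟩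
    intro s
    rw [hc]
    simp [Real.sq_sqrt hc0]
  have hm1 : 1 ≤ m := le_trans (by omega) hdm
  by_cases hroot : ∃ r, p.eval r = 0
  · obtain ⟨r, hr⟩ := hroot
    rcases lt_trichotomy r 0 with hrneg | hrzero | hrpos
    · -- negative root
      obtain ⟨q, hq⟩ := dvd_iff_isRoot.mpr hr
      have hq0 : q ≠ 0 := by rintro rfl; rw [mul_zero] at hq; exact hp0 hq
      have hXr : (X - C r) ≠ 0 := X_sub_C_ne_zero r
      have hdq : q.natDegree ≤ m - 1 := by
        have h1 := natDegree_mul hXr hq0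
        rw [← hq, natDegree_X_sub_C] at h1
        omega
      have hqnn : ∀ s : ℝ, 0 ≤ s → 0 ≤ q.eval s := by
        intro s hs
        have h1 : 0 < s - r := by linarith
        have h2 := hnn s hs
        rw [hq, eval_mul, eval_sub, eval_X, eval_C] at h2
        nlinarith
      obtain ⟨P0, Q0, hP0, hQ0, hid⟩ := IH (m-1) (by omega) q hdq hqnn
      have haa : Real.sqrt (-r) * Real.sqrt (-r) = -r := Real.mul_self_sqrt (by linarith)
      set a := Real.sqrt (-r) with ha
      refine ⟨C a * P0 - X * Q0, P0 + C a * Q0, ?_, ?_, ?_⟩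
      · rcases hQ0 with rfl | hQ0
        · rw [mul_zero, sub_zero]
          have := natDegree_C_mul_le a P0; omega
        · have e1 : (C a * P0).natDegree ≤ P0.natDegree := natDegree_C_mul_le a P0
          have e2 : (X * Q0).natDegree ≤ 1 + Q0.natDegree := by
            refine le_trans natDegree_mul_le ?_; rw [natDegree_X]
          have e3 := natDegree_sub_le (C a * P0) (X * Q0)
          omega
      · right
        have e1 : (P0 + C a * Q0).natDegree ≤ max P0.natDegree (C a * Q0).natDegree :=
          natDegree_add_le _ _
        have e2 : (C a * Q0).natDegree ≤ Q0.natDegree := natDegree_C_mul_le a Q0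
        rcases hQ0 with rfl | hQ0
        · have e3 : ((0:ℝ[X])).natDegree = 0 := natDegree_zero
          omega
        · omega
      · intro s
        have h2 : p.eval s = (s + a * a) * ((P0.eval s)^2 + s * (Q0.eval s)^2) := by
          rw [hq, eval_mul, eval_sub, eval_X, eval_C, hid s, haa]; ring
        rw [h2]
        simp only [eval_sub, eval_add, eval_mul, eval_X, eval_C]
        ring
    · -- root at zero
      subst hrzero
      have hXdvd : (X : ℝ[X]) ∣ p := X_dvd_iff.mpr (by rw [coeff_zero_eq_eval_zero]; exact hr)
      obtain ⟨q, hq⟩ := hXdvd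
      have hq0 : q ≠ 0 := by rintro rfl; rw [mul_zero] at hq; exact hp0 hq
      have hdq : q.natDegree ≤ m - 1 := by
        have h1 := natDegree_mul (X_ne_zero (R := ℝ)) hq0
        rw [← hq, natDegree_X] at h1
        omega
      have hqnn : ∀ s : ℝ, 0 ≤ s → 0 ≤ q.eval s := by
        have hpos : ∀ s ∈ Set.Ioi (0:ℝ), 0 ≤ q.eval s := by
          intro s hs
          have hs' : (0:ℝ) < s := hs
          have h2 := hnn s hs'.le
          rw [hq, eval_mul, eval_X] at h2
          nlinarith
        intro s hs
        have h3 := nonneg_on_closure q (Set.Ioi 0) hpos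
        rw [closure_Ioi] at h3
        exact h3 s hs
      obtain ⟨P0, Q0, hP0, hQ0, hid⟩ := IH (m-1) (by omega) q hdq hqnn
      refine ⟨X * Q0, P0, ?_, Or.inr (by omega), ?_⟩
      · rcases hQ0 with rfl | hQ0
        · rw [mul_zero]; simp
        · have e2 : (X * Q0).natDegree ≤ 1 + Q0.natDegree := by
            refine le_trans natDegree_mul_le ?_; rw [natDegree_X]
          omega
      · intro s
        rw [hq, eval_mul, eval_X, hid s]
        simp only [eval_mul, eval_X]
        ring
    · -- positive root: double
      have hlm : IsLocalMin (fun s => p.eval s) r := by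
        have hmem : Set.Ioi (0:ℝ) ∈ nhds r := Ioi_mem_nhds hrpos
        refine Filter.eventually_of_mem hmem ?_
        intro x hx
        simp only
        rw [hr]
        exact hnn x (le_of_lt hx)
      have hd0 : p.derivative.eval r = 0 := by
        have h2 := hlm.deriv_eq_zero
        rwa [Polynomial.deriv] at h2
      obtain ⟨q, hq⟩ := double_root_of_localmin hr hd0
      have hq0 : q ≠ 0 := by rintro rfl; rw [mul_zero] at hq; exact hp0 hq
      have hXr2 : ((X - C r)^2 : ℝ[X]).natDegree = 2 := by
        rw [natDegree_pow, natDegree_X_sub_C]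
      have hm2 : 2 ≤ m := by
        have h1 := natDegree_le_of_dvd ⟨q, hq⟩ hp0
        rw [hXr2] at h1
        omega
      have hdq : q.natDegree ≤ m - 2 := by
        have h1 := natDegree_mul (pow_ne_zero 2 (X_sub_C_ne_zero r)) hq0
        rw [← hq, hXr2] at h1
        omega
      have hqIoi : ∀ x ∈ Set.Ioi r, 0 ≤ q.eval x := by
        intro x hx
        have hx' : r < x := hx
        have h2 := hnn x (by linarith)
        rw [hq, eval_mul, eval_pow, eval_sub, eval_X, eval_C] at h2
        have h3 : 0 < (x - r)^2 := pow_pos (sub_pos.mpr hx') 2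
        nlinarith
      have hqnn : ∀ s : ℝ, 0 ≤ s → 0 ≤ q.eval s := by
        intro s hs
        by_cases hsr : s = r
        · subst hsr
          have h3 := nonneg_on_closure q (Set.Ioi s) hqIoi
          rw [closure_Ioi] at h3
          exact h3 s Set.self_mem_Ici
        · have h2 := hnn s hs
          rw [hq, eval_mul, eval_pow, eval_sub, eval_X, eval_C] at h2
          have h3 : 0 < (s - r)^2 := by
            have : s - r ≠ 0 := sub_ne_zero.mpr hsr
            positivity
          nlinarith
      obtain ⟨P0, Q0, hP0, hQ0, hid⟩ := IH (m-2) (by omega) q hdq hqnn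
      refine ⟨(X - C r) * P0, (X - C r) * Q0, ?_, ?_, ?_⟩
      · have e1 : ((X - C r) * P0).natDegree ≤ 1 + P0.natDegree := by
          refine le_trans natDegree_mul_le ?_; rw [natDegree_X_sub_C]
        omega
      · rcases hQ0 with rfl | hQ0
        · left; rw [mul_zero]
        · right
          have e1 : ((X - C r) * Q0).natDegree ≤ 1 + Q0.natDegree := by
            refine le_trans natDegree_mul_le ?_; rw [natDegree_X_sub_C]
          omega
      · intro s
        rw [hq, eval_mul, eval_pow, eval_sub, eval_X, eval_C, hid s]
        simp only [eval_mul, eval_sub, eval_X, eval_C]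
        ring
  · -- no real root
    push_neg at hroot
    have hpos : ∀ s, 0 < p.eval s := by
      intro s
      rcases lt_or_gt_of_ne (hroot s) with h | h
      · have h0 : 0 < p.eval 0 := lt_of_le_of_ne (hnn 0 le_rfl) (Ne.symm (hroot 0))
        obtain ⟨c, hc⟩ := exists_root_between p.continuous h.le h0.le
        exact absurd hc (hroot c)
      · exact h
    have hnu : ¬ IsUnit p := not_isUnit_of_natDegree_pos p (by omega)
    obtain ⟨k, hkirr, hkdvd⟩ := WfDvdMonoid.exists_irreducible_factor hnu hp0
    have hk2 : k.natDegree ≤ 2 := hkirr.natDegree_le_two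
    have hknr : ∀ y, k.eval y ≠ 0 := by
      intro y hy
      obtain ⟨c, hc⟩ := hkdvd
      have h2 := hpos y
      rw [hc, eval_mul, hy, zero_mul] at h2
      exact lt_irrefl 0 h2
    have hkne : k ≠ 0 := hkirr.ne_zero
    have hk0 : k.natDegree ≠ 0 := by
      intro h
      have hc : k = C (k.coeff 0) := eq_C_of_natDegree_eq_zero h
      have hc0 : k.coeff 0 ≠ 0 := fun h0 => hkne (by rw [hc, h0, map_zero])
      exact hkirr.not_isUnit (hc ▸ isUnit_C.mpr (isUnit_iff_ne_zero.mpr hc0))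
    have hk1 : k.natDegree ≠ 1 := by
      intro h1
      have hl : k.coeff 1 ≠ 0 := by
        rw [← h1, coeff_natDegree]
        exact leadingCoeff_ne_zero.mpr hkne
      apply hknr (-(k.coeff 0)/(k.coeff 1))
      rw [eval_eq_sum_range' (by omega : k.natDegree < 2)]
      rw [Finset.sum_range_succ, Finset.sum_range_succ, Finset.sum_range_zero]
      field_simp
      ring
    have hk2' : k.natDegree = 2 := by omega
    have ha0 : k.leadingCoeff ≠ 0 := leadingCoeff_ne_zero.mpr hkne
    set a := k.leadingCoeff with hadef
    have hkq' : k = C a * (C a⁻¹ * k) := by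
      rw [← mul_assoc, ← C_mul, mul_inv_cancel₀ ha0, C_1, one_mul]
    set q' := C a⁻¹ * k with hq'def
    have hq'k : q' ∣ k := ⟨C a, by rw [hkq']; ring⟩
    have hq'dvd : q' ∣ p := dvd_trans hq'k hkdvd
    have hq'deg : q'.natDegree = 2 := by
      rw [hq'def, natDegree_C_mul (inv_ne_zero ha0), hk2']
    have hq'c2 : q'.coeff 2 = 1 := by
      rw [hq'def, coeff_C_mul, ← hk2', coeff_natDegree]
      exact inv_mul_cancel₀ ha0
    have hq'nr : ∀ s, q'.eval s ≠ 0 := by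
      intro s h
      apply hknr s
      rw [hkq', eval_mul, h, mul_zero]
    set B := q'.coeff 1 with hBdef
    set Cc := q'.coeff 0 with hCcdef
    have hq'ev : ∀ s : ℝ, q'.eval s = s^2 + B * s + Cc := by
      intro s
      rw [eval_eq_sum_range' (by omega : q'.natDegree < 3) s]
      rw [Finset.sum_range_succ, Finset.sum_range_succ, Finset.sum_range_succ,
        Finset.sum_range_zero, hq'c2]
      ring
    have hq'pos : ∀ s, 0 < q'.eval s := by
      intro s
      rcases lt_or_gt_of_ne (hq'nr s) with h | h
      · exfalso
        have hM : 0 < q'.eval (|B| + |Cc| + 1) := by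
          rw [hq'ev]
          nlinarith [abs_nonneg B, abs_nonneg Cc, le_abs_self B, le_abs_self Cc,
            neg_abs_le B, neg_abs_le Cc]
        obtain ⟨c, hc⟩ := exists_root_between q'.continuous h.le hM.le
        exact hq'nr c hc
      · exact h
    have hCc : 0 < Cc := by
      have h2 := hq'pos 0
      rw [hq'ev] at h2
      nlinarith
    have hβ : Real.sqrt Cc * Real.sqrt Cc = Cc := Real.mul_self_sqrt hCc.le
    have hβpos : 0 < Real.sqrt Cc := Real.sqrt_pos.mpr hCc
    set β := Real.sqrt Cc with hβdef
    have hBβ : 0 < B + 2 * β := by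
      have h1 := hq'pos β
      rw [hq'ev] at h1
      nlinarith
    have hγ : Real.sqrt (B + 2*β) * Real.sqrt (B + 2*β) = B + 2*β :=
      Real.mul_self_sqrt hBβ.le
    set γ := Real.sqrt (B + 2*β) with hγdef
    obtain ⟨q, hq⟩ := id hq'dvd
    have hq0 : q ≠ 0 := by rintro rfl; rw [mul_zero] at hq; exact hp0 hq
    have hq'0 : q' ≠ 0 := fun h => by simp [h] at hq'deg
    have hdq : q.natDegree ≤ m - 2 := by
      have h1 := natDegree_mul hq'0 hq0
      rw [← hq, hq'deg] at h1
      omega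
    have hm2 : 2 ≤ m := by
      have h1 := natDegree_le_of_dvd hq'dvd hp0
      rw [hq'deg] at h1
      omega
    have hqnn : ∀ s : ℝ, 0 ≤ s → 0 ≤ q.eval s := by
      intro s _
      have h1 := hpos s
      have h2 := hq'pos s
      rw [hq, eval_mul] at h1
      nlinarith
    obtain ⟨P0, Q0, hP0, hQ0, hid⟩ := IH (m-2) (by omega) q hdq hqnn
    refine ⟨(X - C β) * P0 - C γ * (X * Q0), (X - C β) * Q0 + C γ * P0, ?_, ?_, ?_⟩
    · have e1 : ((X - C β) * P0).natDegree ≤ 1 + P0.natDegree := by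
        refine le_trans natDegree_mul_le ?_; rw [natDegree_X_sub_C]
      rcases hQ0 with rfl | hQ0
      · rw [mul_zero, mul_zero, sub_zero]
        omega
      · have e2 : (C γ * (X * Q0)).natDegree ≤ 1 + Q0.natDegree := by
          refine le_trans (natDegree_C_mul_le _ _) (le_trans natDegree_mul_le ?_)
          rw [natDegree_X]
        have e3 := natDegree_sub_le ((X - C β) * P0) (C γ * (X * Q0))
        omega
    · right
      have e2 : (C γ * P0).natDegree ≤ P0.natDegree := natDegree_C_mul_le _ _
      rcases hQ0 with rfl | hQ0
      · rw [mul_zero, zero_add]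
        omega
      · have e1 : ((X - C β) * Q0).natDegree ≤ 1 + Q0.natDegree := by
          refine le_trans natDegree_mul_le ?_; rw [natDegree_X_sub_C]
        have e3 := natDegree_add_le ((X - C β) * Q0) (C γ * P0)
        omega
    · intro s
      have h3 : s^2 + B*s + Cc = (s - β)^2 + s * γ^2 := by
        have e1 : γ^2 = B + 2*β := by rw [sq]; exact hγ
        have e2 : β^2 = Cc := by rw [sq]; exact hβ
        rw [e1]
        linear_combination -e2
      have h2 : p.eval s = ((s - β)^2 + s * γ^2) * ((P0.eval s)^2 + s*(Q0.eval s)^2) := by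
        rw [hq, eval_mul, hq'ev s, hid s, h3]
      rw [h2]
      simp only [eval_sub, eval_add, eval_mul, eval_X, eval_C]
      ring

end PolyPart

open MvPolynomial


noncomputable def lr (f : MvPolynomial (Fin 2) ℝ) (v w : Fin 2 → ℝ) : Polynomial ℝ :=
  ∑ d ∈ f.support, Polynomial.C (coeff d f) *
    ∏ i : Fin 2, (Polynomial.C (v i) * Polynomial.X + Polynomial.C (w i)) ^ d i

lemma lr_eval (f : MvPolynomial (Fin 2) ℝ) (v w : Fin 2 → ℝ) (s : ℝ) :
    (lr f v w).eval s = eval (s • v + w) f := by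
  rw [lr, eval_eq', Polynomial.eval_finset_sum]
  apply Finset.sum_congr rfl
  intro d _
  rw [Polynomial.eval_mul, Polynomial.eval_C, Polynomial.eval_prod]
  congr 1
  apply Finset.prod_congr rfl
  intro i _
  rw [Polynomial.eval_pow, Polynomial.eval_add, Polynomial.eval_mul, Polynomial.eval_C,
    Polynomial.eval_X, Polynomial.eval_C]
  congr 1
  simp [mul_comm]

lemma lr_natDegree (f : MvPolynomial (Fin 2) ℝ) (v w : Fin 2 → ℝ) :
    (lr f v w).natDegree ≤ f.totalDegree := by
  apply Polynomial.natDegree_sum_le_of_forall_le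
  intro d hd
  refine le_trans Polynomial.natDegree_mul_le ?_
  rw [Polynomial.natDegree_C, zero_add]
  refine le_trans (Polynomial.natDegree_prod_le _ _) ?_
  have h1 : ∀ i : Fin 2, ((Polynomial.C (v i) * Polynomial.X + Polynomial.C (w i)) ^ d i).natDegree ≤ d i := by
    intro i
    refine le_trans Polynomial.natDegree_pow_le ?_
    have h2 : (Polynomial.C (v i) * Polynomial.X + Polynomial.C (w i)).natDegree ≤ 1 := by
      refine le_trans (Polynomial.natDegree_add_le _ _) ?_
      simp only [Polynomial.natDegree_C]
      refine max_le (le_trans (Polynomial.natDegree_C_mul_le _ _) ?_) (by omega)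
      rw [Polynomial.natDegree_X]
    calc d i * (Polynomial.C (v i) * Polynomial.X + Polynomial.C (w i)).natDegree
        ≤ d i * 1 := Nat.mul_le_mul_left _ h2
      _ = d i := mul_one _
  refine le_trans (Finset.sum_le_sum (fun i _ => h1 i)) ?_
  have h3 := MvPolynomial.le_totalDegree hd
  have h4 : d.sum (fun _ e => e) = ∑ i : Fin 2, d i := Finsupp.sum_fintype _ _ (fun _ => rfl)
  omega
  
lemma eval_smul_homog {n : ℕ} {f : MvPolynomial (Fin 2) ℝ} (hf : f.IsHomogeneous n)
    (c : ℝ) (x : Fin 2 → ℝ) : eval (c • x) f = c ^ n * eval x f := by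
  rw [eval_eq', eval_eq', Finset.mul_sum]
  apply Finset.sum_congr rfl
  intro d hd
  have hdeg : ∑ i : Fin 2, d i = n := by
    have h1 := hf (MvPolynomial.mem_support_iff.mp hd)
    rw [← h1]
    simp [Finsupp.weight_apply, Finsupp.sum_fintype, Pi.one_apply, smul_eq_mul, mul_one]
  calc coeff d f * ∏ i, (c • x) i ^ d i
      = coeff d f * ∏ i, (c ^ d i * x i ^ d i) := by
        congr 1; apply Finset.prod_congr rfl; intro i _
        rw [Pi.smul_apply, smul_eq_mul, mul_pow]
    _ = c ^ n * (coeff d f * ∏ i, x i ^ d i) := by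
        rw [Finset.prod_mul_distrib, Finset.prod_pow_eq_pow_sum, hdeg]; ring

lemma rep_lemma (v w : Fin 2 → ℝ) (hdet : v 0 * w 1 - v 1 * w 0 ≠ 0) (u : Fin 2 → ℝ) :
    ∃ X Y : ℝ, u = X • v + Y • w := by
  refine ⟨(u 0 * w 1 - u 1 * w 0)/(v 0 * w 1 - v 1 * w 0),
    (v 0 * u 1 - v 1 * u 0)/(v 0 * w 1 - v 1 * w 0), ?_⟩
  funext i
  fin_cases i <;>
    simp only [Fin.zero_eta, Fin.mk_one, Pi.add_apply, Pi.smul_apply, smul_eq_mul] <;>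
    rw [div_mul_eq_mul_div, div_mul_eq_mul_div, ← add_div, eq_div_iff hdet] <;> ring

lemma lin_solve (v w : Fin 2 → ℝ) (hdet : v 0 * w 1 - v 1 * w 0 ≠ 0) (a b : ℝ) :
    ∃ c0 c1 : ℝ, (c0 * v 0 + c1 * v 1 = a) ∧ (c0 * w 0 + c1 * w 1 = b) := by
  refine ⟨(a * w 1 - b * v 1)/(v 0 * w 1 - v 1 * w 0),
    (b * v 0 - a * w 0)/(v 0 * w 1 - v 1 * w 0), ?_, ?_⟩ <;>
    rw [div_mul_eq_mul_div, div_mul_eq_mul_div, ← add_div, div_eq_iff hdet] <;> ring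

set_option maxHeartbeats 1000000 in
private lemma quadid (A Bc s X Y : ℝ) (hA0 : A ≠ 0) (hs0 : s ≠ 0) :
    A*(X*((-Bc+s)/(2*A*s)) + Y*((Bc+s)/(2*s)))^2
      + Bc*((X*((-Bc+s)/(2*A*s)) + Y*((Bc+s)/(2*s)))*(X*(1/s) + Y*(-A/s)))
      + ((Bc^2 - s*s)/(4*A))*(X*(1/s) + Y*(-A/s))^2 = X*Y := by
  field_simp
  ring

lemma quad_factor (g : MvPolynomial (Fin 2) ℝ) (hg : g.IsHomogeneous 2)
    (x' z : Fin 2 → ℝ) (hpos : 0 < eval x' g) (hneg : eval z g < 0) :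
    ∃ v w : Fin 2 → ℝ, (v 0 * w 1 - v 1 * w 0 ≠ 0) ∧
      ∀ X Y : ℝ, eval (X • v + Y • w) g = X * Y := by
  have hg0 : g ≠ 0 := by rintro rfl; simp at hpos
  have hsm : ∀ (c : ℝ) x, eval (c • x) g = c^2 * eval x g := fun c x => eval_smul_homog hg c x
  set q1 := lr g ![1,0] ![0,1] with hq1def
  have hq1d : q1.natDegree < 3 := by
    have h1 := lr_natDegree g ![1,0] ![0,1]
    rw [← hq1def] at h1
    have h2 := hg.totalDegree hg0
    omega
  set A := q1.coeff 2 with hAdef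
  set Bc := q1.coeff 1 with hBcdef
  set Cc := q1.coeff 0 with hCcdef
  have hq1ev : ∀ s : ℝ, eval ![s,1] g = Cc + Bc * s + A * s^2 := by
    intro s
    have h1 : eval ![s,(1:ℝ)] g = q1.eval s := by
      have hv : (s • ![1,0] + ![0,1] : Fin 2 → ℝ) = ![s,1] := by
        funext i; fin_cases i <;> simp
      rw [hq1def, lr_eval, hv]
    rw [h1, Polynomial.eval_eq_sum_range' hq1d, Finset.sum_range_succ, Finset.sum_range_succ,
      Finset.sum_range_succ, Finset.sum_range_zero]
    ring
  have hA : eval ![(1:ℝ),0] g = A := by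
    set r := lr g ![0,1] ![1,0] with hrdef
    have hr1 : ∀ y : ℝ, r.eval y = eval ![(1:ℝ),y] g := by
      intro y
      have hv : (y • ![0,1] + ![1,0] : Fin 2 → ℝ) = ![1,y] := by
        funext i; fin_cases i <;> simp
      rw [hrdef, lr_eval, hv]
    have hr2 : ∀ y : ℝ, y ≠ 0 → r.eval y = A + Bc * y + Cc * y^2 := by
      intro y hy
      have h1 : (![(1:ℝ),y]) = y • ![1/y, 1] := by
        funext i; fin_cases i <;> simp [smul_eq_mul] <;> field_simp
      rw [hr1, h1, hsm, hq1ev]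
      field_simp
      ring
    have heq : r = Polynomial.C A + Polynomial.C Bc * Polynomial.X
        + Polynomial.C Cc * Polynomial.X^2 := by
      apply Polynomial.eq_of_infinite_eval_eq
      apply Set.Infinite.mono (s := {y : ℝ | y ≠ 0})
      · intro y hy
        simp only [Set.mem_setOf_eq] at hy ⊢
        rw [hr2 y hy]
        simp
      · have : {y : ℝ | y ≠ 0} = {(0:ℝ)}ᶜ := by ext y; simp
        rw [this]
        exact (Set.finite_singleton 0).infinite_compl
    have h0 := hr1 0
    rw [heq] at h0
    simp at h0
    exact h0.symm
  have hGform : ∀ x : Fin 2 → ℝ, eval x g = A * (x 0)^2 + Bc * (x 0 * x 1) + Cc * (x 1)^2 := by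
    intro x
    by_cases hx1 : x 1 = 0
    · calc eval x g = (x 0)^2 * eval ![(1:ℝ),0] g := by
            rw [← hsm]
            have hv : ((x 0) • ![(1:ℝ),0] : Fin 2 → ℝ) = x := by
              funext i; fin_cases i <;> simp [hx1]
            rw [hv]
      _ = A * (x 0)^2 + Bc * (x 0 * x 1) + Cc * (x 1)^2 := by rw [hA, hx1]; ring
    · calc eval x g = (x 1)^2 * eval ![x 0 / x 1, (1:ℝ)] g := by
            rw [← hsm]
            have hv : ((x 1) • ![x 0 / x 1, (1:ℝ)] : Fin 2 → ℝ) = x := by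
              funext i; fin_cases i <;> simp [smul_eq_mul] <;> field_simp
            rw [hv]
      _ = A * (x 0)^2 + Bc * (x 0 * x 1) + Cc * (x 1)^2 := by
            rw [hq1ev]
            field_simp
            ring
  have hD : 0 < Bc^2 - 4*A*Cc := by
    by_contra hD'
    push_neg at hD'
    rcases eq_or_ne A 0 with hA0 | hA0
    · rw [hA0] at hD'
      have hB2 : Bc^2 = 0 := le_antisymm (by nlinarith) (sq_nonneg Bc)
      have hB0 : Bc = 0 := by
        nlinarith [sq_nonneg Bc, sq_abs Bc, abs_nonneg Bc, sq_nonneg (Bc - 1), sq_nonneg (Bc + 1)]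
      have h1 := hGform x'
      have h2 := hGform z
      rw [hA0, hB0] at h1 h2
      rw [h1] at hpos
      rw [h2] at hneg
      nlinarith [sq_nonneg (x' 1), sq_nonneg (z 1), mul_pos hpos (neg_pos.mpr hneg),
        mul_nonneg (mul_nonneg (sq_nonneg Cc) (sq_nonneg (x' 1))) (sq_nonneg (z 1))]
    · rcases lt_or_gt_of_ne hA0 with hAneg | hApos
      · have h1 := hGform x'
        rw [h1] at hpos
        nlinarith [sq_nonneg (2*A*(x' 0) + Bc*(x' 1)),
          mul_nonneg (by nlinarith : (0:ℝ) ≤ 4*A*Cc - Bc^2) (sq_nonneg (x' 1)),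
          mul_pos (neg_pos.mpr hAneg) hpos]
      · have h2 := hGform z
        rw [h2] at hneg
        nlinarith [sq_nonneg (2*A*(z 0) + Bc*(z 1)),
          mul_nonneg (by nlinarith : (0:ℝ) ≤ 4*A*Cc - Bc^2) (sq_nonneg (z 1)),
          mul_pos hApos (neg_pos.mpr hneg)]
  clear_value q1 A Bc Cc
  rcases eq_or_ne A 0 with hA0 | hA0
  · have hB0 : Bc ≠ 0 := by intro h; rw [hA0, h] at hD; norm_num at hD
    refine ⟨![-Cc/Bc, 1], ![1/Bc, 0], ?_, ?_⟩
    · simp only [Matrix.cons_val_zero, Matrix.cons_val_one, Matrix.head_cons]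
      have : -Cc/Bc * 0 - 1 * (1/Bc) = -(1/Bc) := by ring
      rw [this]
      simp [hB0]
    · intro X Y
      rw [hGform]
      simp only [Pi.add_apply, Pi.smul_apply, Matrix.cons_val_zero, Matrix.cons_val_one,
        Matrix.head_cons, smul_eq_mul]
      rw [hA0]
      field_simp
      ring
  · have hs : Real.sqrt (Bc^2 - 4*A*Cc) * Real.sqrt (Bc^2 - 4*A*Cc) = Bc^2 - 4*A*Cc :=
      Real.mul_self_sqrt hD.le
    have hspos : 0 < Real.sqrt (Bc^2 - 4*A*Cc) := Real.sqrt_pos.mpr hD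
    set s := Real.sqrt (Bc^2 - 4*A*Cc) with hsdef
    clear_value s
    have hs0 : s ≠ 0 := ne_of_gt hspos
    have hCc2 : Cc = (Bc^2 - s*s)/(4*A) := by
      rw [hs]; field_simp; ring
    refine ⟨![(-Bc + s)/(2*A*s), 1/s], ![(Bc + s)/(2*s), -A/s], ?_, ?_⟩
    · simp only [Matrix.cons_val_zero, Matrix.cons_val_one, Matrix.head_cons]
      have hdet : (-Bc + s)/(2*A*s) * (-A/s) - (1/s) * ((Bc + s)/(2*s)) = -(1/s) := by
        field_simp
        ring
      rw [hdet]
      simp [hs0]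
    · intro X Y
      rw [hGform]
      simp only [Pi.add_apply, Pi.smul_apply, Matrix.cons_val_zero, Matrix.cons_val_one,
        Matrix.head_cons, smul_eq_mul]
      rw [hCc2]
      exact quadid A Bc s X Y hA0 hs0

end S4aux
open MvPolynomial S4aux

theorem stmt_12 (f g : MvPolynomial (Fin 2) ℝ)
    (hf : f.IsHomogeneous 4) (hg : g.IsHomogeneous 2)
    (x' : Fin 2 → ℝ) (hx' : 0 < eval x' g) :
    {x : Fin 2 → ℝ | 0 ≤ eval x g} ⊆ {x : Fin 2 → ℝ | 0 ≤ eval x f} ↔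
      ∃ t : MvPolynomial (Fin 2) ℝ, (∃ m ≤ 2, t.IsHomogeneous m) ∧
        (∀ x : Fin 2 → ℝ, 0 ≤ eval x t) ∧
        ∀ x : Fin 2 → ℝ, 0 ≤ eval x f - eval x t * eval x g := by
  constructor
  · intro hsub
    by_cases hF : ∀ x : Fin 2 → ℝ, 0 ≤ eval x f
    · exact ⟨0, ⟨0, by norm_num, isHomogeneous_zero _ _ _⟩, by simp, fun x => by
        simpa using hF x⟩
    · push_neg at hF
      obtain ⟨z, hz⟩ := hF
      have hgz : eval z g < 0 := by
        by_contra h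
        push_neg at h
        exact absurd (hsub h) (not_le.mpr hz)
      have hf0 : f ≠ 0 := by rintro rfl; simp at hz
      obtain ⟨v, w, hdet, hvw⟩ := quad_factor g hg x' z hx' hgz
      have hdeg : (lr f v w).natDegree ≤ 4 := by
        have h1 := lr_natDegree f v w
        have h2 := hf.totalDegree hf0
        omega
      have hnnh : ∀ s : ℝ, 0 ≤ s → 0 ≤ (lr f v w).eval s := by
        intro s hs
        rw [lr_eval]
        refine hsub ?_
        show (0:ℝ) ≤ eval (s • v + w) g
        have h1 := hvw s 1
        rw [one_smul] at h1
        rw [h1, mul_one]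
        exact hs
      obtain ⟨P, Q, hP, hQ, hid⟩ := ML 4 (lr f v w) hdeg hnnh
      have hQdeg : Q.natDegree < 2 := by
        rcases hQ with rfl | h
        · simp
        · omega
      have hQev : ∀ s : ℝ, Q.eval s = Q.coeff 1 * s + Q.coeff 0 := by
        intro s
        rw [Polynomial.eval_eq_sum_range' hQdeg, Finset.sum_range_succ, Finset.sum_range_succ,
          Finset.sum_range_zero]
        ring
      obtain ⟨c0, c1, hc0, hc1⟩ := lin_solve v w hdet (Q.coeff 1) (Q.coeff 0)
      refine ⟨(C c0 * X 0 + C c1 * X 1)^2, ⟨2, le_rfl, ?_⟩, ?_, ?_⟩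
      · have h1 : (C c0 * X 0 + C c1 * X 1 : MvPolynomial (Fin 2) ℝ).IsHomogeneous 1 :=
          (isHomogeneous_C_mul_X c0 0).add (isHomogeneous_C_mul_X c1 1)
        have h2 := h1.pow 2
        simpa using h2
      · intro x
        have h1 : eval x ((C c0 * X 0 + C c1 * X 1 : MvPolynomial (Fin 2) ℝ)^2)
            = (c0 * x 0 + c1 * x 1)^2 := by simp
        rw [h1]
        positivity
      · intro u
        obtain ⟨Xc, Yc, hu⟩ := rep_lemma v w hdet u
        have hG : eval u g = Xc * Yc := by rw [hu]; exact hvw Xc Yc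
        have ht : eval u ((C c0 * X 0 + C c1 * X 1 : MvPolynomial (Fin 2) ℝ)^2)
            = (Q.coeff 1 * Xc + Q.coeff 0 * Yc)^2 := by
          have h0 : u 0 = Xc * v 0 + Yc * w 0 := by rw [hu]; simp
          have h1 : u 1 = Xc * v 1 + Yc * w 1 := by rw [hu]; simp
          simp only [map_pow, eval_add, eval_mul, eval_C, eval_X]
          rw [h0, h1]
          congr 1
          linear_combination Xc * hc0 + Yc * hc1
        by_cases hY : Yc = 0
        · have hu2 : u = Xc • v := by rw [hu, hY]; funext i; simp
          have hFu : eval u f = Xc^4 * eval v f := by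
            rw [hu2]; exact eval_smul_homog hf Xc v
          have hFv : 0 ≤ eval v f := by
            refine hsub ?_
            show (0:ℝ) ≤ eval v g
            have h1 := hvw 1 0
            rw [one_smul, zero_smul, add_zero] at h1
            rw [h1]
            norm_num
          have hGu : eval u g = 0 := by rw [hG, hY, mul_zero]
          rw [hFu, hGu, mul_zero, sub_zero]
          exact mul_nonneg (by positivity) hFv
        · set s := Xc / Yc with hsdef
          have hXc : Xc = s * Yc := by rw [hsdef]; field_simp
          clear_value s
          have hu2 : u = Yc • (s • v + w) := by
            rw [hu, hXc]; funext i
            simp only [Pi.add_apply, Pi.smul_apply, smul_eq_mul]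
            ring
          have hFu : eval u f = Yc^4 * ((P.eval s)^2 + s * (Q.eval s)^2) := by
            rw [hu2, eval_smul_homog hf, ← lr_eval, hid]
          rw [hFu, hG, ht, hQev s, hXc]
          nlinarith [sq_nonneg (Yc^2 * P.eval s)]
  · rintro ⟨t, -, htnn, hts⟩ x hx
    have hx' : (0:ℝ) ≤ eval x g := hx
    have h1 := hts x
    have h2 := mul_nonneg (htnn x) hx'
    show (0:ℝ) ≤ eval x f
    linarith
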